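/- Let A be a finite-dimensional unital associative algebra over a field with Jacobson radical R, let (e,f) be a strict idempotent pair in A and (e',f') an idempotent pair in A, and suppose eAf ⊆ e'Af'. Then there exists a strict idempotent pair (e'',f'') in A such that e'e'' = e''e' = e'', f'f'' = f''f' = f'', and e''Af'' = eAf. -/

import Mathlib

namespace Paper

variable (F A : Type*) [Field F] [Ring A] [Algebra F A]

/-- The derived series `A⁽ᵏ⁾` of the Lie algebra `A⁽⁻⁾` (as subspaces of `A`). -/
def derivedSeries : ℕ → Submodule F A
  | 0 => ⊤
  | (k+1) => Submodule.span F
      {z : A | ∃ x ∈ derivedSeries k, ∃ y ∈ derivedSeries k, z = ⁅x, y⁆}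

variable {F A}

/-- `B` is an inner ideal of the Lie algebra given by the subspace `L` of `A⁽⁻⁾`. -/
def IsInnerIdeal (L B : Submodule F A) : Prop :=
  B ≤ L ∧ ∀ b ∈ B, ∀ b' ∈ B, ∀ x ∈ L, ⁅b, ⁅b', x⁆⁆ ∈ B

/-- `B` is a Jordan-Lie inner ideal of `L`. -/
def IsJordanLie (L B : Submodule F A) : Prop :=
  IsInnerIdeal L B ∧ ∀ b ∈ B, ∀ b' ∈ B, b * b' = 0

/-- Jacobson radical of `A` as an `F`-subspace. -/
noncomputable def radical : Submodule F A :=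
  (Ideal.jacobson (⊥ : Ideal A)).restrictScalars F

/-- The Jacobson radical of a subalgebra `A'`, as a subset of `A`. -/
def subalgRad (A' : Subalgebra F A) : Set A :=
  Subtype.val '' ((Ideal.jacobson (⊥ : Ideal A')) : Set A')

/-- `c` represents a central idempotent of the quotient of the
(sub)algebra with carrier `S` by the ideal with carrier `ρ`. -/
def IsCentralIdempotentMod (S ρ : Set A) (c : A) : Prop :=
  c ∈ S ∧ (∀ a ∈ S, c * a - a * c ∈ ρ) ∧ c * c - c ∈ ρ

/-- `c` represents a primitive central idempotent of the quotient mod `ρ`. -/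
def IsPrimitiveCentralIdempotentMod (S ρ : Set A) (c : A) : Prop :=
  IsCentralIdempotentMod S ρ c ∧ c ∉ ρ ∧
    ¬ ∃ c₁ c₂ : A, IsCentralIdempotentMod S ρ c₁ ∧ IsCentralIdempotentMod S ρ c₂ ∧
      c₁ ∉ ρ ∧ c₂ ∉ ρ ∧ c₁ * c₂ ∈ ρ ∧ c₂ * c₁ ∈ ρ ∧ c - (c₁ + c₂) ∈ ρ

/-- The idempotent pair `(e, f)` is strict w.r.t. the quotient mod `ρ`:
for every primitive central idempotent `c` of the quotient, `c·ē = 0 ↔ c·f̄ = 0`. -/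
def IsStrictPairMod (S ρ : Set A) (e f : A) : Prop :=
  ∀ c : A, IsPrimitiveCentralIdempotentMod S ρ c → (c * e ∈ ρ ↔ c * f ∈ ρ)

/-- `(e,f)` is a strict idempotent pair of `A` (strictness w.r.t. `A/rad A`). -/
def IsStrictPair (e f : A) : Prop :=
  e * e = e ∧ f * f = f ∧
    IsStrictPairMod Set.univ ((Ideal.jacobson (⊥ : Ideal A)) : Set A) e f

/-- `J` is a two-sided ideal of the (possibly non-unital) algebra `P`. -/
def IsTwoSidedIdealIn (P J : Submodule F A) : Prop :=
  J ≤ P ∧ ∀ p ∈ P, ∀ x ∈ J, p * x ∈ J ∧ x * p ∈ J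

/-- The algebra with carrier `P` is 1-perfect: it has no two-sided ideals of
codimension 1. -/
def IsOnePerfect (P : Submodule F A) : Prop :=
  ¬ ∃ J : Submodule F A, IsTwoSidedIdealIn P J ∧
      Module.finrank F P = Module.finrank F J + 1


section RingPart
variable {B : Type*} [Ring B]

lemma jac_mul_right {x : B} (hx : x ∈ Ideal.jacobson (⊥ : Ideal B)) (a : B) :
    x * a ∈ Ideal.jacobson (⊥ : Ideal B) :=
  (Ideal.jacobson (⊥ : Ideal B)).mul_mem_right a hx

lemma exists_left_inv {x : B} (hx : x ∈ Ideal.jacobson (⊥ : Ideal B)) :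
    ∃ u : B, u * (1 - x) = 1 := by
  obtain ⟨z, hz⟩ := Ideal.mem_jacobson_iff.1 hx (-1)
  rw [Ideal.mem_bot] at hz
  refine ⟨z, ?_⟩
  have h : z * (1 - x) - 1 = z * -1 * x + z - 1 := by noncomm_ring
  rw [hz] at h
  exact sub_eq_zero.mp h

lemma exists_inv {x : B} (hx : x ∈ Ideal.jacobson (⊥ : Ideal B)) :
    ∃ u : B, u * (1 - x) = 1 ∧ (1 - x) * u = 1 := by
  obtain ⟨u, hu⟩ := exists_left_inv hx
  have hux : -(u * x) ∈ Ideal.jacobson (⊥ : Ideal B) :=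
    neg_mem (Ideal.mul_mem_left _ u hx)
  obtain ⟨w, hw⟩ := exists_left_inv hux
  have hwu : w * u = 1 := by
    have hexp : u - u * x = 1 := by
      have h : u * (1 - x) = u - u * x := by noncomm_ring
      rwa [h] at hu
    have h1 : u = 1 - -(u * x) := by
      rw [sub_neg_eq_add]
      exact eq_add_of_sub_eq hexp
    rw [h1]; exact hw
  have hw1 : w = 1 - x := by
    have := congrArg (fun t => w * t) hu
    simp only [mul_one] at this
    calc w = w * (u * (1 - x)) := by rw [hu, mul_one]
    _ = (w * u) * (1 - x) := by rw [mul_assoc]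
    _ = 1 - x := by rw [hwu, one_mul]
  exact ⟨u, hu, by rw [← hw1]; exact hwu⟩

lemma exists_pow_eq_zero [IsArtinian B B] {x : B} (hx : x ∈ Ideal.jacobson (⊥ : Ideal B)) :
    ∃ n : ℕ, x ^ n = 0 := by
  have mono : ∀ n : ℕ, (Ideal.span {x ^ (n + 2)} : Ideal B) ≤ Ideal.span {x ^ (n + 1)} := by
    intro n
    rw [Ideal.span_le, Set.singleton_subset_iff]
    have : x ^ (n + 2) = x * x ^ (n + 1) := by rw [← pow_succ']
    rw [this]
    exact Ideal.mul_mem_left _ _ (Ideal.subset_span rfl)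
  obtain ⟨I, ⟨⟨n, hI⟩, hmin⟩⟩ := IsArtinian.set_has_minimal
    (a := {I : Submodule B B | ∃ n : ℕ, I = Ideal.span {x ^ (n + 1)}})
    ⟨Ideal.span {x ^ 1}, 0, rfl⟩
  have hle : (Ideal.span {x ^ (n + 2)} : Ideal B) ≤ I := hI ▸ mono n
  have heq : (Ideal.span {x ^ (n + 2)} : Ideal B) = I := by
    by_contra hne
    exact hmin _ ⟨n + 1, rfl⟩ (lt_of_le_of_ne hle hne)
  have hx1 : x ^ (n + 1) ∈ (Ideal.span {x ^ (n + 2)} : Ideal B) := by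
    rw [heq, hI]
    exact Ideal.subset_span rfl
  obtain ⟨a, ha⟩ := Submodule.mem_span_singleton.1 hx1
  have ha' : x ^ (n + 1) = (a * x) * x ^ (n + 1) := by
    conv_lhs => rw [← ha]
    rw [smul_eq_mul, show x ^ (n+2) = x * x ^ (n+1) from by rw [← pow_succ'], ← mul_assoc]
  obtain ⟨u, hu⟩ := exists_left_inv (Ideal.mul_mem_left _ a hx)
  refine ⟨n + 1, ?_⟩
  calc x ^ (n+1) = u * ((1 - a * x) * x ^ (n+1)) := by rw [← mul_assoc, hu, one_mul]
  _ = u * (x ^ (n+1) - (a*x) * x ^ (n+1)) := by noncomm_ring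
  _ = 0 := by rw [← ha', sub_self, mul_zero]

open MulOpposite in
lemma op_mem_jacobson_iff (x : B) :
    op x ∈ Ideal.jacobson (⊥ : Ideal Bᵐᵒᵖ) ↔ x ∈ Ideal.jacobson (⊥ : Ideal B) := by
  have key : ∀ (C : Type _) (_ : Ring C), ∀ c : C,
      (c ∈ Ideal.jacobson (⊥ : Ideal C)) → ∀ y : C, ∃ z : C, c * y * z + z - 1 = 0 := by
    intro C _ c hc y
    have hyx : -(y * c) ∈ Ideal.jacobson (⊥ : Ideal C) :=
      neg_mem (Ideal.mul_mem_left _ y hc)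
    obtain ⟨u, hu1, hu2⟩ := exists_inv hyx
    rw [sub_neg_eq_add] at hu1 hu2
    refine ⟨1 - c * u * y, ?_⟩
    have h : c * y * (1 - c * u * y) + (1 - c * u * y) - 1
        = c * y - c * ((1 + y * c) * u) * y := by noncomm_ring
    rw [hu2] at h
    rw [h]; noncomm_ring
  constructor
  · intro h
    rw [Ideal.mem_jacobson_iff]
    intro y
    obtain ⟨Z, hZ⟩ := key Bᵐᵒᵖ _ (op x) h (op y)
    refine ⟨unop Z, ?_⟩
    rw [Ideal.mem_bot]
    have h2 := congrArg unop hZ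
    simpa [mul_assoc] using h2
  · intro h
    rw [Ideal.mem_jacobson_iff]
    intro Y
    obtain ⟨z, hz⟩ := key B _ x h (unop Y)
    refine ⟨op z, ?_⟩
    rw [Ideal.mem_bot]
    have h2 := congrArg op hz
    simpa [mul_assoc] using h2

lemma isSemisimpleModule_of_isSimple {R M : Type*} [Ring R] [AddCommGroup M] [Module R M]
    [IsSimpleModule R M] : IsSemisimpleModule R M := by
  apply IsSemisimpleModule.of_sSup_simples_eq_top
  rw [eq_top_iff]
  exact le_sSup (IsSimpleModule.congr Submodule.topEquiv)

theorem quot_jacobson_semisimple (B : Type*) [Ring B] [IsArtinian B B] [Nontrivial B] :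
    IsSemisimpleModule B (B ⧸ (Ideal.jacobson (⊥ : Ideal B) : Ideal B)) := by
  classical
  obtain ⟨I, ⟨⟨s, hs, hI⟩, hmin⟩⟩ := IsArtinian.set_has_minimal
    (a := {I : Submodule B B | ∃ s : Finset (Ideal B), (∀ m ∈ s, m.IsMaximal) ∧ I = s.inf id})
    ⟨⊤, ∅, by simp, by simp⟩
  have hIle : ∀ m : Ideal B, m.IsMaximal → I ≤ m := by
    intro m hm
    by_contra hle
    have hlt : I ⊓ m < I := lt_of_le_of_ne inf_le_left (fun hh => hle (hh ▸ inf_le_right))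
    refine hmin (I ⊓ m) ⟨insert m s, ?_, ?_⟩ hlt
    · intro m' hm'
      rcases Finset.mem_insert.1 hm' with h | h
      · exact h ▸ hm
      · exact hs m' h
    · rw [Finset.inf_insert, hI, inf_comm]; rfl
  have hJI : Ideal.jacobson (⊥ : Ideal B) = I := by
    apply le_antisymm
    · rw [hI]
      apply Finset.le_inf
      intro m hm
      exact sInf_le ⟨bot_le, hs m hm⟩
    · apply le_sInf
      rintro m ⟨-, hm⟩
      exact hIle m hm
  letI : ∀ (m : {x // x ∈ s}), IsSemisimpleModule B (B ⧸ (m : Ideal B)) := by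
    intro m
    have : IsSimpleModule B (B ⧸ (m : Ideal B)) := by
      rw [isSimpleModule_iff_isCoatom]
      exact Ideal.isMaximal_def.mp (hs m m.2)
    exact isSemisimpleModule_of_isSimple
  have hpi : IsSemisimpleModule B (∀ m : {x // x ∈ s}, B ⧸ (m : Ideal B)) :=
    isSemisimpleModule_of_isSemisimpleModule_submodule'
      (p := fun i => LinearMap.range (LinearMap.single B _ i))
      (fun i => .range _)
      (by simp_rw [LinearMap.range_eq_map, Submodule.iSup_map_single, Submodule.pi_top])
  let φ : B →ₗ[B] (∀ m : {x // x ∈ s}, B ⧸ (m : Ideal B)) :=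
    LinearMap.pi fun m => Submodule.mkQ (m : Ideal B)
  have hker : LinearMap.ker φ = Ideal.jacobson (⊥ : Ideal B) := by
    rw [LinearMap.ker_pi, hJI, hI]
    simp only [Submodule.ker_mkQ]
    rw [Finset.inf_eq_iInf]
    rw [iInf_subtype]
    rfl
  haveI : IsSemisimpleModule B (LinearMap.range φ) := inferInstance
  have h5 : IsSemisimpleModule B (B ⧸ LinearMap.ker φ) :=
    IsSemisimpleModule.congr (M := LinearMap.range φ) (LinearMap.quotKerEquivRange φ)
  exact hker ▸ h5

theorem exists_right_unit_mod (B : Type*) [Ring B] [IsArtinian B B] [Nontrivial B] (N : Ideal B) :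
    ∃ z ∈ N, ∀ x ∈ N, x * z - x ∈ Ideal.jacobson (⊥ : Ideal B) := by
  haveI := quot_jacobson_semisimple B
  set J : Ideal B := Ideal.jacobson (⊥ : Ideal B) with hJ
  let π := Submodule.mkQ (J : Submodule B B)
  obtain ⟨K, hK⟩ := exists_isCompl (Submodule.map π N)
  have h1 : π 1 ∈ Submodule.map π N ⊔ K := by rw [hK.sup_eq_top]; trivial
  obtain ⟨nb, hnb, kb, hkb, hsum⟩ := Submodule.mem_sup.1 h1
  obtain ⟨z, hzN, hz⟩ := hnb
  refine ⟨z, hzN, ?_⟩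
  intro x hx
  have hπ1z : π (1 - z) = kb := by
    rw [map_sub, hz, ← hsum]
    abel
  have hxk : π (x * (1 - z)) ∈ K := by
    have h2 : x * (1 - z) = x • (1 - z) := rfl
    rw [h2, map_smul, hπ1z]
    exact K.smul_mem x hkb
  have hxN : π (x * (1 - z)) ∈ Submodule.map π N := by
    refine Submodule.mem_map_of_mem ?_
    have h3 : x * (1 - z) = x - x * z := by noncomm_ring
    rw [h3]
    exact N.sub_mem hx (Ideal.mul_mem_left _ x hzN)
  have hzero : π (x * (1 - z)) = 0 := Submodule.disjoint_def.1 hK.disjoint _ hxN hxk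
  have hmem : x * (1 - z) ∈ J := by
    rwa [Submodule.mkQ_apply, Submodule.Quotient.mk_eq_zero] at hzero
  have h4 : x * z - x = -(x * (1 - z)) := by noncomm_ring
  rw [h4]
  exact neg_mem hmem

open MulOpposite in
theorem exists_central_gen (B : Type*) [Ring B] [IsArtinian B B] [IsArtinian Bᵐᵒᵖ Bᵐᵒᵖ]
    [Nontrivial B] (N : Ideal B) (hNr : ∀ x ∈ N, ∀ a : B, x * a ∈ N) :
    ∃ z ∈ N, (z * z - z ∈ Ideal.jacobson (⊥ : Ideal B)) ∧
      (∀ a : B, z * a - a * z ∈ Ideal.jacobson (⊥ : Ideal B)) ∧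
      (∀ x ∈ N, x * z - x ∈ Ideal.jacobson (⊥ : Ideal B)) ∧
      (∀ x ∈ N, z * x - x ∈ Ideal.jacobson (⊥ : Ideal B)) := by
  set J : Ideal B := Ideal.jacobson (⊥ : Ideal B) with hJdef
  obtain ⟨z, hzN, hz⟩ := exists_right_unit_mod B N
  let Nop : Ideal Bᵐᵒᵖ :=
    { carrier := unop ⁻¹' (N : Set B)
      add_mem' := fun ha hb => by
        simp only [Set.mem_preimage, SetLike.mem_coe] at *
        rw [unop_add]; exact N.add_mem ha hb
      zero_mem' := by simp
      smul_mem' := fun a m hm => by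
        simp only [Set.mem_preimage, SetLike.mem_coe] at *
        rw [smul_eq_mul, unop_mul]
        exact hNr _ hm _ }
  obtain ⟨Z, hZN, hZ⟩ := exists_right_unit_mod Bᵐᵒᵖ Nop
  set z₂ := unop Z with hz₂def
  have hz₂N : z₂ ∈ N := hZN
  have hleft : ∀ x ∈ N, z₂ * x - x ∈ J := by
    intro x hx
    have h1 := hZ (op x) (show unop (op x) ∈ N by simpa using hx)
    have h2 : op x * Z - op x = op (z₂ * x - x) := by
      rw [op_sub, op_mul, op_unop]
    rw [h2] at h1
    exact (op_mem_jacobson_iff _).1 h1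
  have hzz₂ : z - z₂ ∈ J := by
    have h1 := hleft z hzN
    have h2 := hz z₂ hz₂N
    have h3 : z - z₂ = -(z₂ * z - z) + (z₂ * z - z₂) := by noncomm_ring
    rw [h3]; exact add_mem (neg_mem h1) h2
  have hLeftId : ∀ x ∈ N, z * x - x ∈ J := by
    intro x hx
    have h3 := hleft x hx
    have h4 : z * x - x = (z - z₂) * x + (z₂ * x - x) := by noncomm_ring
    rw [h4]; exact add_mem (jac_mul_right hzz₂ _) h3
  refine ⟨z, hzN, hz z hzN, ?_, hz, hLeftId⟩
  intro a
  have h1 : z * a * z - z * a ∈ J := hz (z * a) (hNr z hzN a)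
  have h2 : z * (a * z) - a * z ∈ J := hLeftId (a * z) (Ideal.mul_mem_left _ a hzN)
  have h3 : z * a - a * z = -(z * a * z - z * a) + (z * (a * z) - a * z) := by noncomm_ring
  rw [h3]; exact add_mem (neg_mem h1) h2

section Decomp
variable {F A : Type*} [Field F] [Ring A] [Algebra F A] [FiniteDimensional F A]

lemma mem_coe_jac {x : A} : x ∈ ((Ideal.jacobson (⊥ : Ideal A) : Ideal A) : Set A) ↔
    x ∈ Ideal.jacobson (⊥ : Ideal A) := Iff.rfl

variable (F) in
noncomputable def Tsub (c : A) : Submodule F A :=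
  ((Ideal.jacobson (⊥ : Ideal A)).restrictScalars F) ⊔ LinearMap.range (LinearMap.mulRight F c)

lemma prim_decomp_aux (n : ℕ) : ∀ c : A,
    IsCentralIdempotentMod (Set.univ : Set A) ((Ideal.jacobson (⊥ : Ideal A) : Ideal A) : Set A) c →
    c ∉ Ideal.jacobson (⊥ : Ideal A) →
    Module.finrank F (Tsub F c) ≤ n →
    ∃ l : List A,
      (∀ d ∈ l, IsPrimitiveCentralIdempotentMod (Set.univ : Set A)
        ((Ideal.jacobson (⊥ : Ideal A) : Ideal A) : Set A) d) ∧
      c - l.sum ∈ Ideal.jacobson (⊥ : Ideal A) := by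
  set J : Ideal A := Ideal.jacobson (⊥ : Ideal A) with hJdef
  have hmemT : ∀ c : A, c ∈ Tsub F c := by
    intro c
    apply Submodule.mem_sup_right
    exact ⟨1, one_mul c⟩
  have habsorb : ∀ c d : A, d - d * c ∈ J → ∀ x : A, x * d ∈ Tsub F c := by
    intro c d hd x
    have h1 : x * d - x * d * c ∈ J := by
      have h2 := Ideal.mul_mem_left J x hd
      rwa [mul_sub, ← mul_assoc] at h2
    exact Submodule.mem_sup.2 ⟨x * d - x * d * c, h1, x * d * c, ⟨x * d, rfl⟩, by abel⟩
  induction n with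
  | zero =>
    intro c hc hc0 hn
    exfalso
    have hT0 : Tsub F c = ⊥ := Submodule.finrank_eq_zero.1 (Nat.le_zero.1 hn)
    have := hmemT c
    rw [hT0, Submodule.mem_bot] at this
    exact hc0 (this ▸ J.zero_mem)
  | succ n ih =>
    intro c hc hc0 hn
    by_cases hprim : IsPrimitiveCentralIdempotentMod (Set.univ : Set A) (J : Set A) c
    · exact ⟨[c], by simpa using hprim, by simpa using J.zero_mem⟩
    · have hex : ∃ c₁ c₂ : A, IsCentralIdempotentMod (Set.univ : Set A) (J : Set A) c₁ ∧
          IsCentralIdempotentMod (Set.univ : Set A) (J : Set A) c₂ ∧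
          c₁ ∉ (J : Set A) ∧ c₂ ∉ (J : Set A) ∧ c₁ * c₂ ∈ (J : Set A) ∧ c₂ * c₁ ∈ (J : Set A) ∧
          c - (c₁ + c₂) ∈ (J : Set A) := by
        by_contra hno
        exact hprim ⟨hc, hc0, hno⟩
      obtain ⟨c₁, c₂, hc₁, hc₂, h10, h20, h12, h21, hsum⟩ := hex
      rw [mem_coe_jac] at h12 h21 hsum
      have hd : ∀ {d₁ d₂ : A}, IsCentralIdempotentMod (Set.univ : Set A) (J : Set A) d₁ →
          d₁ * d₂ ∈ J → c - (d₁ + d₂) ∈ J → d₁ - d₁ * c ∈ J := by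
        intro d₁ d₂ hcd hdd hsum'
        have h1 : d₁ * d₁ - d₁ ∈ J := hcd.2.2
        have h2 : d₁ * (c - (d₁ + d₂)) ∈ J := Ideal.mul_mem_left _ _ hsum'
        have he : d₁ - d₁ * c = -(d₁ * d₁ - d₁) - d₁ * d₂ - d₁ * (c - (d₁ + d₂)) := by
          noncomm_ring
        rw [he]
        exact sub_mem (sub_mem (neg_mem h1) hdd) h2
      have hd₁ : c₁ - c₁ * c ∈ J := hd hc₁ h12 hsum
      have hd₂ : c₂ - c₂ * c ∈ J := hd hc₂ h21 (by rwa [add_comm c₁ c₂] at hsum)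
      have hTle : ∀ {d₁ d₂ : A}, d₁ - d₁ * c ∈ J → d₂ - d₂ * c ∈ J → d₂ ∉ J → d₂ * d₁ ∈ J →
          (d₁ * d₁ - d₁ ∈ J) → Module.finrank F (Tsub F d₁) ≤ n := by
        intro d₁ d₂ hdd₁ hdd₂ hd₂0 hd21 hidem
        have hle : Tsub F d₁ ≤ Tsub F c := by
          apply sup_le
          · exact le_sup_left
          · rintro _ ⟨x, rfl⟩
            exact habsorb c d₁ hdd₁ x
        have hne : Tsub F d₁ ≠ Tsub F c := by
          intro heq
          have hmem2 : d₂ ∈ Tsub F c :=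
            Submodule.mem_sup.2 ⟨d₂ - d₂ * c, hdd₂, d₂ * c, ⟨d₂, rfl⟩, by abel⟩
          rw [← heq] at hmem2
          obtain ⟨j, hj, y, ⟨x, rfl⟩, hceq⟩ := Submodule.mem_sup.1 hmem2
          simp only [LinearMap.mulRight_apply] at hceq
          have hjJ : j ∈ J := hj
          have hxc : x * d₁ ∈ J := by
            have h3 : x * (d₁ * d₁ - d₁) ∈ J := Ideal.mul_mem_left _ _ hidem
            have h4 : d₂ * d₁ - j * d₁ = x * d₁ * d₁ := by
              rw [← hceq]; noncomm_ring
            have h5 : x * d₁ = -(x * (d₁ * d₁ - d₁)) + (d₂ * d₁ - j * d₁) := by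
              rw [h4]; noncomm_ring
            rw [h5]
            exact add_mem (neg_mem h3) (sub_mem hd21 (jac_mul_right hjJ d₁))
          apply hd₂0
          rw [← hceq]
          exact J.add_mem hjJ hxc
        have hlt := lt_of_le_of_ne hle hne
        have := Submodule.finrank_lt_finrank_of_lt hlt
        omega
      have hn₁ := hTle hd₁ hd₂ (by rwa [mem_coe_jac] at h20) h21 hc₁.2.2
      have hn₂ := hTle hd₂ hd₁ (by rwa [mem_coe_jac] at h10) h12 hc₂.2.2
      obtain ⟨l₁, hl₁, hs₁⟩ := ih c₁ hc₁ (by rwa [mem_coe_jac] at h10) hn₁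
      obtain ⟨l₂, hl₂, hs₂⟩ := ih c₂ hc₂ (by rwa [mem_coe_jac] at h20) hn₂
      refine ⟨l₁ ++ l₂, ?_, ?_⟩
      · intro d hdmem
        rcases List.mem_append.1 hdmem with h | h
        · exact hl₁ d h
        · exact hl₂ d h
      · rw [List.sum_append]
        have he : c - (l₁.sum + l₂.sum) =
            (c - (c₁ + c₂)) + (c₁ - l₁.sum) + (c₂ - l₂.sum) := by abel
        rw [he]
        exact add_mem (add_mem hsum hs₁) hs₂

end Decomp

theorem one_decomp (F : Type*) {A : Type*} [Field F] [Ring A] [Algebra F A]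
    [FiniteDimensional F A] [Nontrivial A] :
    ∃ l : List A,
      (∀ d ∈ l, IsPrimitiveCentralIdempotentMod (Set.univ : Set A)
        ((Ideal.jacobson (⊥ : Ideal A) : Ideal A) : Set A) d) ∧
      (1 : A) - l.sum ∈ Ideal.jacobson (⊥ : Ideal A) := by
  apply prim_decomp_aux (F := F) (Module.finrank F (Tsub F (1 : A))) (1 : A)
  · exact ⟨trivial, fun a _ => by simpa using (Ideal.jacobson (⊥ : Ideal A)).zero_mem,
      by simpa using (Ideal.jacobson (⊥ : Ideal A)).zero_mem⟩
  · intro h1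
    obtain ⟨u, hu⟩ := exists_left_inv h1
    rw [sub_self, mul_zero] at hu
    exact zero_ne_one hu
  · exact le_refl _
open Polynomial

noncomputable def newtonPoly (F : Type*) [Field F] : ℕ → Polynomial F
  | 0 => X
  | (k+1) => 3 * (newtonPoly F k)^2 - 2 * (newtonPoly F k)^3

variable {F : Type*} [Field F]

lemma newtonPoly_sq_sub (k : ℕ) :
    ((X : Polynomial F)^2 - X)^(2^k) ∣ (newtonPoly F k)^2 - newtonPoly F k := by
  induction k with
  | zero => simpa [newtonPoly] using dvd_refl _
  | succ k ih =>
    obtain ⟨S, hS⟩ := ih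
    set g := newtonPoly F k
    refine ⟨S^2 * (4*g^2 - 4*g - 3), ?_⟩
    have hiden : (newtonPoly F (k+1))^2 - newtonPoly F (k+1)
        = ((g^2 - g))^2 * (4*g^2 - 4*g - 3) := by
      show (3*g^2 - 2*g^3)^2 - (3*g^2 - 2*g^3) = _
      ring
    rw [hiden, hS]
    rw [pow_succ]
    ring

lemma newtonPoly_X_dvd (k : ℕ) : (X : Polynomial F) ∣ newtonPoly F k := by
  induction k with
  | zero => exact dvd_refl _
  | succ k ih =>
    obtain ⟨q, hq⟩ := ih
    refine ⟨3*(X*q)*q - 2*(X*q)^2*q, ?_⟩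
    show 3 * (newtonPoly F k)^2 - 2 * (newtonPoly F k)^3 = _
    rw [hq]; ring

lemma newtonPoly_eval_one (k : ℕ) : (newtonPoly F k).eval 1 = 1 := by
  induction k with
  | zero => simp [newtonPoly]
  | succ k ih =>
    have h : newtonPoly F (k+1) = 3 * (newtonPoly F k)^2 - 2 * (newtonPoly F k)^3 := rfl
    rw [h]
    simp [ih]
    norm_num

lemma newtonPoly_sub_X (k : ℕ) :
    ((X : Polynomial F)^2 - X) ∣ (newtonPoly F k - X) := by
  induction k with
  | zero => simp [newtonPoly]
  | succ k ih =>
    have h1 : ((X : Polynomial F)^2 - X) ∣ ((newtonPoly F k)^2 - newtonPoly F k) :=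
      (dvd_pow_self ((X : Polynomial F)^2 - X) (Nat.two_pow_pos k).ne').trans
        (newtonPoly_sq_sub k)
    have h2 : newtonPoly F (k+1) - X
        = ((newtonPoly F k)^2 - newtonPoly F k) * (-2 * newtonPoly F k + 1)
          + (newtonPoly F k - X) := by
      show 3 * (newtonPoly F k)^2 - 2 * (newtonPoly F k)^3 - X = _
      ring
    rw [h2]
    exact dvd_add (Dvd.dvd.mul_right h1 _) ih

theorem newton_lift (F : Type*) [Field F] {A : Type*} [Ring A] [Algebra F A] (t : A)
    (hnil : ∃ n : ℕ, (t*t - t)^n = 0) :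
    ∃ p y r : A,
      p * p = p ∧
      p - t = (t*t - t) * r ∧
      p = t * y ∧ p = y * t ∧
      (∀ z : A, t * z = z → p * z = z) ∧
      (∀ z : A, z * t = z → z * p = z) := by
  obtain ⟨n, hn⟩ := hnil
  have hX2X : Polynomial.aeval t ((X : Polynomial F)^2 - X) = t*t - t := by
    simp [pow_two]
  have hεpow : (t*t - t)^(2^n) = 0 := by
    have hle : n ≤ 2^n := Nat.le_of_lt (Nat.lt_two_pow_self)
    calc (t*t - t)^(2^n) = (t*t - t)^n * (t*t - t)^(2^n - n) := by
          rw [← pow_add]; congr 1; omega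
    _ = 0 := by rw [hn, zero_mul]
  obtain ⟨S, hS⟩ := newtonPoly_sq_sub (F := F) n
  obtain ⟨q, hq⟩ := newtonPoly_X_dvd (F := F) n
  obtain ⟨Q, hQ⟩ := newtonPoly_sub_X (F := F) n
  have hidem : Polynomial.aeval t (newtonPoly F n) * Polynomial.aeval t (newtonPoly F n)
      = Polynomial.aeval t (newtonPoly F n) := by
    have h1 : Polynomial.aeval t (newtonPoly F n) * Polynomial.aeval t (newtonPoly F n)
        - Polynomial.aeval t (newtonPoly F n)
        = Polynomial.aeval t ((newtonPoly F n)^2 - newtonPoly F n) := by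
      rw [map_sub, map_pow, pow_two]
    rw [hS, map_mul, map_pow, hX2X, hεpow, zero_mul] at h1
    exact sub_eq_zero.mp h1
  have haux1 : ∀ (P : Polynomial F) (z : A), t * z = z →
      (Polynomial.aeval t P) * z = (algebraMap F A (P.eval 1)) * z := by
    intro P
    induction P using Polynomial.induction_on' with
    | add u v hu hv =>
      intro z hz
      rw [map_add, Polynomial.eval_add, map_add, add_mul, add_mul, hu z hz, hv z hz]
    | monomial m a =>
      intro z hz
      have hpow : ∀ k : ℕ, t^k * z = z := by
        intro k
        induction k with
        | zero => rw [pow_zero, one_mul]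
        | succ k ihk => rw [pow_succ', mul_assoc, ihk, hz]
      rw [Polynomial.aeval_monomial, Polynomial.eval_monomial, one_pow, mul_one,
        mul_assoc, hpow m]
  have haux2 : ∀ (P : Polynomial F) (z : A), z * t = z →
      z * (Polynomial.aeval t P) = z * (algebraMap F A (P.eval 1)) := by
    intro P
    induction P using Polynomial.induction_on' with
    | add u v hu hv =>
      intro z hz
      rw [map_add, Polynomial.eval_add, map_add, mul_add, mul_add, hu z hz, hv z hz]
    | monomial m a =>
      intro z hz
      have hpow : ∀ k : ℕ, z * t^k = z := by
        intro k
        induction k with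
        | zero => rw [pow_zero, mul_one]
        | succ k ihk => rw [pow_succ, ← mul_assoc, ihk, hz]
      rw [Polynomial.aeval_monomial, Polynomial.eval_monomial, one_pow, mul_one,
        Algebra.commutes, ← mul_assoc, hpow m]
  refine ⟨Polynomial.aeval t (newtonPoly F n), Polynomial.aeval t q, Polynomial.aeval t Q,
    hidem, ?_, ?_, ?_, ?_, ?_⟩
  · have h2 : Polynomial.aeval t (newtonPoly F n) - t
        = Polynomial.aeval t (newtonPoly F n - X) := by
      rw [map_sub, Polynomial.aeval_X]
    rw [h2, hQ, map_mul, hX2X]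
  · conv_lhs => rw [hq]
    rw [map_mul, Polynomial.aeval_X]
  · conv_lhs => rw [hq, mul_comm (X : Polynomial F) q]
    rw [map_mul, Polynomial.aeval_X]
  · intro z hz
    rw [haux1 (newtonPoly F n) z hz, newtonPoly_eval_one, map_one, one_mul]
  · intro z hz
    rw [haux2 (newtonPoly F n) z hz, newtonPoly_eval_one, map_one, mul_one]
lemma artinian_self (F A : Type*) [Field F] [Ring A] [Algebra F A] [FiniteDimensional F A] :
    IsArtinian A A := isArtinian_of_tower F inferInstance

lemma findim_op (F A : Type*) [Field F] [Ring A] [Algebra F A] [FiniteDimensional F A] :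
    FiniteDimensional F Aᵐᵒᵖ :=
  Module.Finite.equiv (MulOpposite.opLinearEquiv F)

lemma artinian_op (F A : Type*) [Field F] [Ring A] [Algebra F A] [FiniteDimensional F A] :
    IsArtinian Aᵐᵒᵖ Aᵐᵒᵖ := by
  haveI := findim_op F A
  exact isArtinian_of_tower F inferInstance

theorem prim_kill (F : Type*) {A : Type*} [Field F] [Ring A] [Algebra F A]
    [FiniteDimensional F A] [Nontrivial A] (c w g : A)
    (hprim : IsPrimitiveCentralIdempotentMod (Set.univ : Set A)
      ((Ideal.jacobson (⊥ : Ideal A) : Ideal A) : Set A) c)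
    (hwf : ∀ x : A, w * x * g = 0)
    (hcf : c * g ∉ Ideal.jacobson (⊥ : Ideal A)) :
    c * w ∈ Ideal.jacobson (⊥ : Ideal A) := by
  haveI := artinian_self F A
  haveI := artinian_op F A
  set J : Ideal A := Ideal.jacobson (⊥ : Ideal A) with hJdef
  have hccen : ∀ a : A, c * a - a * c ∈ J := fun a => hprim.1.2.1 a trivial
  have hcidem : c * c - c ∈ J := hprim.1.2.2
  set N : Ideal A := J ⊔ Submodule.span A (Set.range fun b => c * w * b) with hNdef
  have hNr : ∀ x ∈ N, ∀ a : A, x * a ∈ N := by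
    intro x hx a
    obtain ⟨j, hj, s, hs, rfl⟩ := Submodule.mem_sup.1 hx
    clear hx
    have hja : j * a ∈ J := jac_mul_right hj a
    have hsa : s * a ∈ Submodule.span A (Set.range fun b => c * w * b) := by
      induction hs using Submodule.span_induction with
      | mem y hy =>
        obtain ⟨b, rfl⟩ := hy
        exact Submodule.subset_span ⟨b * a, by dsimp only; noncomm_ring⟩
      | zero => rw [zero_mul]; exact Submodule.zero_mem _
      | add y z _ _ hy hz => rw [add_mul]; exact Submodule.add_mem _ hy hz
      | smul r y _ hy => rw [smul_eq_mul, mul_assoc]; exact Submodule.smul_mem _ r hy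
    rw [add_mul]
    exact Submodule.add_mem _ (Submodule.mem_sup_left hja) (Submodule.mem_sup_right hsa)
  obtain ⟨z, hzN, hzidem, hzcen, hzright, hzleft⟩ :=
    exists_central_gen A N hNr
  have hF1 : ∀ x ∈ N, x * g ∈ J := by
    intro x hx
    obtain ⟨j, hj, s, hs, rfl⟩ := Submodule.mem_sup.1 hx
    clear hx
    have hsg : s * g = 0 := by
      induction hs using Submodule.span_induction with
      | mem y hy =>
        obtain ⟨b, rfl⟩ := hy
        have hc : c * w * b * g = c * (w * b * g) := by noncomm_ring
        rw [hc, hwf b, mul_zero]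
      | zero => rw [zero_mul]
      | add y z _ _ hy hz => rw [add_mul, hy, hz, add_zero]
      | smul r y _ hy => rw [smul_eq_mul, mul_assoc, hy, mul_zero]
    rw [add_mul, hsg, add_zero]
    exact jac_mul_right hj g
  have hF2 : ∀ x ∈ N, c * x - x ∈ J := by
    intro x hx
    obtain ⟨j, hj, s, hs, rfl⟩ := Submodule.mem_sup.1 hx
    clear hx
    have hsc : c * s - s ∈ J := by
      induction hs using Submodule.span_induction with
      | mem y hy =>
        obtain ⟨b, rfl⟩ := hy
        have he : c * (c * w * b) - c * w * b = (c * c - c) * (w * b) := by noncomm_ring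
        rw [he]
        exact jac_mul_right hcidem _
      | zero => rw [mul_zero, sub_zero]; exact J.zero_mem
      | add y z _ _ hy hz =>
        have he : c * (y + z) - (y + z) = (c * y - y) + (c * z - z) := by noncomm_ring
        rw [he]; exact add_mem hy hz
      | smul r y _ hy =>
        have he : c * (r • y) - r • y = (c * r - r * c) * y + r * (c * y - y) := by
          rw [smul_eq_mul]; noncomm_ring
        rw [he]
        exact add_mem (jac_mul_right (hccen r) y) (Ideal.mul_mem_left _ r hy)
    have he : c * (j + s) - (j + s) = ((c * j - j) + (c * s - s)) := by noncomm_ring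
    rw [he]
    exact add_mem (sub_mem (Ideal.mul_mem_left _ c hj) hj) hsc
  have hcwN : c * w ∈ N := by
    apply Submodule.mem_sup_right
    exact Submodule.subset_span ⟨1, by dsimp only; rw [mul_one]⟩
  by_cases hz0 : z ∈ J
  · have h1 := hzright (c * w) hcwN
    have h2 : c * w = -(c * w * z - c * w) + (c * w) * z := by noncomm_ring
    rw [h2]
    exact add_mem (neg_mem h1) (Ideal.mul_mem_left _ _ hz0)
  · by_cases hcz0 : c - z ∈ J
    · exfalso
      apply hcf
      have h2 : c * g = (c - z) * g + z * g := by noncomm_ring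
      rw [h2]
      exact add_mem (jac_mul_right hcz0 g) (hF1 z hzN)
    · exfalso
      apply hprim.2.2
      have hcz : c * z - z ∈ J := hF2 z hzN
      have hzc : z * c - z ∈ J := by
        have he : z * c - z = (z * c - c * z) + (c * z - z) := by noncomm_ring
        rw [he]; exact add_mem (hzcen c) hcz
      refine ⟨z, c - z, ⟨trivial, fun a _ => hzcen a, hzidem⟩,
        ⟨trivial, fun a _ => ?_, ?_⟩, hz0, hcz0, ?_, ?_, by simp⟩
      · have he : (c - z) * a - a * (c - z) = (c * a - a * c) - (z * a - a * z) := by noncomm_ring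
        rw [he]; exact sub_mem (hccen a) (hzcen a)
      · have he : (c - z) * (c - z) - (c - z)
            = (c * c - c) + (z * z - z) - (c * z - z) - (z * c - z) := by noncomm_ring
        rw [he]
        exact sub_mem (sub_mem (add_mem hcidem hzidem) hcz) hzc
      · have he : z * (c - z) = (z * c - z) - (z * z - z) := by noncomm_ring
        rw [he]; exact sub_mem hzc hzidem
      · have he : (c - z) * z = (c * z - z) - (z * z - z) := by noncomm_ring
        rw [he]; exact sub_mem hcz hzidem

open MulOpposite in
lemma op_centralIdem {A : Type*} [Ring A] (c : A)
    (h : IsCentralIdempotentMod (Set.univ : Set A)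
      ((Ideal.jacobson (⊥ : Ideal A) : Ideal A) : Set A) c) :
    IsCentralIdempotentMod (Set.univ : Set Aᵐᵒᵖ)
      ((Ideal.jacobson (⊥ : Ideal Aᵐᵒᵖ) : Ideal Aᵐᵒᵖ) : Set Aᵐᵒᵖ) (op c) := by
  obtain ⟨-, hcen, hidem⟩ := h
  refine ⟨trivial, fun a _ => ?_, ?_⟩
  · have h := hcen (unop a) trivial
    have h2 : op c * a - a * op c = op (unop a * c - c * unop a) := by
      rw [op_sub, op_mul, op_mul, op_unop]
    rw [h2]
    have h4 : unop a * c - c * unop a = -(c * unop a - unop a * c) := by noncomm_ring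
    show op (unop a * c - c * unop a) ∈ Ideal.jacobson (⊥ : Ideal Aᵐᵒᵖ)
    rw [op_mem_jacobson_iff, h4]
    exact neg_mem h
  · have h2 : op c * op c - op c = op (c * c - c) := by rw [op_sub, op_mul]
    show op c * op c - op c ∈ Ideal.jacobson (⊥ : Ideal Aᵐᵒᵖ)
    rw [h2, op_mem_jacobson_iff]
    exact hidem

open MulOpposite in
lemma unop_centralIdem {A : Type*} [Ring A] (C : Aᵐᵒᵖ)
    (h : IsCentralIdempotentMod (Set.univ : Set Aᵐᵒᵖ)
      ((Ideal.jacobson (⊥ : Ideal Aᵐᵒᵖ) : Ideal Aᵐᵒᵖ) : Set Aᵐᵒᵖ) C) :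
    IsCentralIdempotentMod (Set.univ : Set A)
      ((Ideal.jacobson (⊥ : Ideal A) : Ideal A) : Set A) (unop C) := by
  obtain ⟨-, hcen, hidem⟩ := h
  refine ⟨trivial, fun a _ => ?_, ?_⟩
  · have h := hcen (op a) trivial
    have h2 : C * op a - op a * C = op (a * unop C - unop C * a) := by
      rw [op_sub, op_mul, op_mul, op_unop]
    rw [h2] at h
    have h3 : a * unop C - unop C * a ∈ Ideal.jacobson (⊥ : Ideal A) :=
      (op_mem_jacobson_iff _).1 h
    have h4 : unop C * a - a * unop C = -(a * unop C - unop C * a) := by noncomm_ring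
    show unop C * a - a * unop C ∈ Ideal.jacobson (⊥ : Ideal A)
    rw [h4]
    exact neg_mem h3
  · have h2 : C * C - C = op (unop C * unop C - unop C) := by
      rw [op_sub, op_mul, op_unop]
    rw [h2] at hidem
    exact (op_mem_jacobson_iff _).1 hidem

open MulOpposite in
lemma op_prim {A : Type*} [Ring A] {c : A}
    (h : IsPrimitiveCentralIdempotentMod (Set.univ : Set A)
      ((Ideal.jacobson (⊥ : Ideal A) : Ideal A) : Set A) c) :
    IsPrimitiveCentralIdempotentMod (Set.univ : Set Aᵐᵒᵖ)
      ((Ideal.jacobson (⊥ : Ideal Aᵐᵒᵖ) : Ideal Aᵐᵒᵖ) : Set Aᵐᵒᵖ) (op c) := by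
  obtain ⟨hcent, hc0, hnex⟩ := h
  refine ⟨op_centralIdem c hcent, ?_, ?_⟩
  · intro hc
    exact hc0 ((op_mem_jacobson_iff c).1 hc)
  · rintro ⟨C₁, C₂, h1, h2, h10, h20, h12, h21, hsum⟩
    apply hnex
    refine ⟨unop C₁, unop C₂, unop_centralIdem C₁ h1, unop_centralIdem C₂ h2, ?_, ?_, ?_, ?_, ?_⟩
    · intro hmem
      apply h10
      show C₁ ∈ Ideal.jacobson (⊥ : Ideal Aᵐᵒᵖ)
      rw [← op_unop C₁, op_mem_jacobson_iff]
      exact hmem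
    · intro hmem
      apply h20
      show C₂ ∈ Ideal.jacobson (⊥ : Ideal Aᵐᵒᵖ)
      rw [← op_unop C₂, op_mem_jacobson_iff]
      exact hmem
    · have he : C₂ * C₁ = op (unop C₁ * unop C₂) := by rw [op_mul, op_unop, op_unop]
      rw [he] at h21
      exact (op_mem_jacobson_iff _).1 h21
    · have he : C₁ * C₂ = op (unop C₂ * unop C₁) := by rw [op_mul, op_unop, op_unop]
      rw [he] at h12
      exact (op_mem_jacobson_iff _).1 h12
    · have he : op c - (C₁ + C₂) = op (c - (unop C₁ + unop C₂)) := by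
        rw [op_sub, op_add, op_unop, op_unop]
      rw [he] at hsum
      exact (op_mem_jacobson_iff _).1 hsum

open MulOpposite in
theorem prim_kill_op (F : Type*) {A : Type*} [Field F] [Ring A] [Algebra F A]
    [FiniteDimensional F A] [Nontrivial A] (c w g : A)
    (hprim : IsPrimitiveCentralIdempotentMod (Set.univ : Set A)
      ((Ideal.jacobson (⊥ : Ideal A) : Ideal A) : Set A) c)
    (hwf : ∀ x : A, g * x * w = 0)
    (hcf : c * g ∉ Ideal.jacobson (⊥ : Ideal A)) :
    c * w ∈ Ideal.jacobson (⊥ : Ideal A) := by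
  haveI := findim_op F A
  have hccen : ∀ a : A, c * a - a * c ∈ Ideal.jacobson (⊥ : Ideal A) :=
    fun a => hprim.1.2.1 a trivial
  have hwop : ∀ X : Aᵐᵒᵖ, (op w) * X * (op g) = 0 := by
    intro X
    have he : (op w) * X * (op g) = op (g * unop X * w) := by
      rw [op_mul, op_mul, op_unop, mul_assoc]
    rw [he, hwf (unop X), op_zero]
  have hcfop : (op c) * (op g) ∉ Ideal.jacobson (⊥ : Ideal Aᵐᵒᵖ) := by
    intro hmem
    apply hcf
    have he : (op c) * (op g) = op (g * c) := by rw [op_mul]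
    rw [he, op_mem_jacobson_iff] at hmem
    have h2 : c * g = (c * g - g * c) + g * c := by noncomm_ring
    rw [h2]
    exact add_mem (hccen g) hmem
  have hres := prim_kill F (op c) (op w) (op g) (op_prim hprim) hwop hcfop
  have he : (op c) * (op w) = op (w * c) := by rw [op_mul]
  rw [he, op_mem_jacobson_iff] at hres
  have h2 : c * w = (c * w - w * c) + w * c := by noncomm_ring
  rw [h2]
  exact add_mem (hccen w) hres
lemma list_sum_mul_mem {A : Type*} [Ring A] (J : Ideal A) (l : List A) (w : A)
    (h : ∀ c ∈ l, c * w ∈ J) : l.sum * w ∈ J := by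
  induction l with
  | nil => simp
  | cons c t ih =>
    rw [List.sum_cons, add_mul]
    exact add_mem (h c (by simp)) (ih fun d hd => h d (by simp [hd]))

end RingPart

theorem claim1 (F : Type*) {A : Type*} [Field F] [Ring A] [Algebra F A] [FiniteDimensional F A]
    [Nontrivial A] (e f e' f' : A)
    (hstrict : IsStrictPair e f) (he' : e' * e' = e') (hf' : f' * f' = f')
    (hkey : ∀ x : A, e * x * f = e' * (e * x * f) * f') :
    e' * e - e ∈ Ideal.jacobson (⊥ : Ideal A) ∧ f * f' - f ∈ Ideal.jacobson (⊥ : Ideal A) := by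
  set J : Ideal A := Ideal.jacobson (⊥ : Ideal A) with hJdef
  have habs : ∀ k : A, k = e' * k * f' → e' * k = k ∧ k * f' = k := by
    intro k hk
    constructor
    · conv_lhs => rw [hk]
      rw [← mul_assoc, ← mul_assoc, he']
      exact hk.symm
    · conv_lhs => rw [hk]
      rw [mul_assoc, hf']
      exact hk.symm
  have hwf : ∀ x : A, (e - e' * e) * x * f = 0 := by
    intro x
    have h1 := (habs (e * x * f) (hkey x)).1
    have h2 : (e - e' * e) * x * f = e * x * f - e' * (e * x * f) := by noncomm_ring
    rw [h2, h1, sub_self]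
  have hfw : ∀ x : A, e * x * (f - f * f') = 0 := by
    intro x
    have h1 := (habs (e * x * f) (hkey x)).2
    have h2 : e * x * (f - f * f') = e * x * f - (e * x * f) * f' := by noncomm_ring
    rw [h2, h1, sub_self]
  obtain ⟨l, hl, hlsum⟩ := one_decomp F (A := A)
  have hstrict' : ∀ c : A, IsPrimitiveCentralIdempotentMod (Set.univ : Set A) (↑J) c →
      (c * e ∈ J ↔ c * f ∈ J) := fun c hc => hstrict.2.2 c hc
  have hfinish : ∀ w : A, (∀ c ∈ l, c * w ∈ J) → w ∈ J := by
    intro w hcw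
    have h1 : (1 - l.sum) * w ∈ J := jac_mul_right hlsum w
    have h2 : w = (1 - l.sum) * w + l.sum * w := by noncomm_ring
    rw [h2]
    exact add_mem h1 (list_sum_mul_mem J l w hcw)
  constructor
  · have hw : e - e' * e ∈ J := by
      apply hfinish
      intro c hcl
      have hprim := hl c hcl
      by_cases hcf : c * f ∈ J
      · have hce : c * e ∈ J := (hstrict' c hprim).2 hcf
        have hccen : c * e' - e' * c ∈ J := hprim.1.2.1 e' trivial
        have he2 : c * (e - e' * e) = c * e - (c * e' - e' * c) * e - e' * (c * e) := by
          noncomm_ring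
        rw [he2]
        exact sub_mem (sub_mem hce (jac_mul_right hccen e)) (Ideal.mul_mem_left _ _ hce)
      · exact prim_kill F c (e - e' * e) f hprim hwf hcf
    have h3 : e' * e - e = -(e - e' * e) := by noncomm_ring
    rw [h3]
    exact neg_mem hw
  · have hw : f - f * f' ∈ J := by
      apply hfinish
      intro c hcl
      have hprim := hl c hcl
      by_cases hce : c * e ∈ J
      · have hcf : c * f ∈ J := (hstrict' c hprim).1 hce
        have he2 : c * (f - f * f') = c * f - (c * f) * f' := by noncomm_ring
        rw [he2]
        exact sub_mem hcf (jac_mul_right hcf f')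
      · exact prim_kill_op F c (f - f * f') e hprim hfw hce
    have h3 : f * f' - f = -(f - f * f') := by noncomm_ring
    rw [h3]
    exact neg_mem hw

/-- **Theorem.** Let `A` be a finite-dimensional unital associative algebra over a
field, `(e,f)` a strict idempotent pair and `(e',f')` an idempotent pair with
`eAf ⊆ e'Af'`.  Then there is a strict idempotent pair `(e'',f'')` with
`e'e'' = e''e' = e''`, `f'f'' = f''f' = f''` and `e''Af'' = eAf`. -/
theorem strict_pair_inside (F A : Type*) [Field F] [Ring A] [Algebra F A]
    [FiniteDimensional F A] (e f e' f' : A)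
    (hstrict : IsStrictPair e f)
    (he' : e' * e' = e') (hf' : f' * f' = f')
    (hsub : ∀ x : A, ∃ y : A, e * x * f = e' * y * f') :
    ∃ e'' f'' : A, IsStrictPair e'' f'' ∧
      e' * e'' = e'' ∧ e'' * e' = e'' ∧ f' * f'' = f'' ∧ f'' * f' = f'' ∧
      (∀ x : A, ∃ y : A, e'' * x * f'' = e * y * f) ∧
      (∀ x : A, ∃ y : A, e * x * f = e'' * y * f'') := by
  rcases subsingleton_or_nontrivial A with hA | hA
  · exact ⟨e, f, hstrict, Subsingleton.elim _ _, Subsingleton.elim _ _,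
      Subsingleton.elim _ _, Subsingleton.elim _ _,
      fun x => ⟨x, Subsingleton.elim _ _⟩, fun x => ⟨x, Subsingleton.elim _ _⟩⟩
  haveI := artinian_self F A
  set J : Ideal A := Ideal.jacobson (⊥ : Ideal A) with hJdef
  obtain ⟨hee, hff, hmod⟩ := hstrict
  have hkey : ∀ x : A, e * x * f = e' * (e * x * f) * f' := by
    intro x
    obtain ⟨y, hy⟩ := hsub x
    rw [hy]
    calc e' * y * f' = (e' * e') * y * (f' * f') := by rw [he', hf']
    _ = e' * (e' * y * f') * f' := by noncomm_ring
  obtain ⟨hc1, hc2⟩ := claim1 F e f e' f' ⟨hee, hff, hmod⟩ he' hf' hkey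
  have habs : ∀ k : A, k = e' * k * f' → e' * k = k ∧ k * f' = k := by
    intro k hk
    constructor
    · conv_lhs => rw [hk]
      rw [← mul_assoc, ← mul_assoc, he']
      exact hk.symm
    · conv_lhs => rw [hk]
      rw [mul_assoc, hf']
      exact hk.symm
  set u : A := e' * e * e' with hudef
  set v : A := f' * f * f' with hvdef
  have heu : e' * u = u := by rw [hudef, ← mul_assoc, ← mul_assoc, he']
  have hue' : u * e' = u := by rw [hudef, mul_assoc, he']
  have hfv : f' * v = v := by rw [hvdef, ← mul_assoc, ← mul_assoc, hf']
  have hvf' : v * f' = v := by rw [hvdef, mul_assoc, hf']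
  have hue2 : u - e * e' ∈ J := by
    have h1 : u - e * e' = (e' * e - e) * e' := by rw [hudef]; noncomm_ring
    rw [h1]
    exact jac_mul_right hc1 e'
  have hvf2 : v - f' * f ∈ J := by
    have h1 : v - f' * f = f' * (f * f' - f) := by rw [hvdef]; noncomm_ring
    rw [h1]
    exact Ideal.mul_mem_left _ f' hc2
  have hmm : (e * e') * (e * e') - e * e' ∈ J := by
    have h1 : (e * e') * (e * e') - e * e' = e * (e' * e - e) * e' + (e * e - e) * e' := by
      noncomm_ring
    rw [h1, hee, sub_self, zero_mul, add_zero]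
    exact jac_mul_right (Ideal.mul_mem_left _ e hc1) e'
  have huu : u * u - u ∈ J := by
    have h1 : u * u - u = (u - e * e') * u + (e * e') * (u - e * e')
        + ((e * e') * (e * e') - e * e') - (u - e * e') := by noncomm_ring
    rw [h1]
    exact sub_mem (add_mem (add_mem (jac_mul_right hue2 u)
      (Ideal.mul_mem_left _ _ hue2)) hmm) hue2
  have hnn : (f' * f) * (f' * f) - f' * f ∈ J := by
    have h1 : (f' * f) * (f' * f) - f' * f = f' * (f * f' - f) * f + f' * (f * f - f) := by
      noncomm_ring
    rw [h1, hff, sub_self, mul_zero, add_zero]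
    exact jac_mul_right (Ideal.mul_mem_left _ f' hc2) f
  have hvv : v * v - v ∈ J := by
    have h1 : v * v - v = (v - f' * f) * v + (f' * f) * (v - f' * f)
        + ((f' * f) * (f' * f) - f' * f) - (v - f' * f) := by noncomm_ring
    rw [h1]
    exact sub_mem (add_mem (add_mem (jac_mul_right hvf2 v)
      (Ideal.mul_mem_left _ _ hvf2)) hnn) hvf2
  obtain ⟨p, yp, rp, hpp, hpsub, hpty, hpyt, hpleft, hpright⟩ :=
    newton_lift F u (exists_pow_eq_zero huu)
  obtain ⟨q, yq, rq, hqq, hqsub, hqty, hqyt, hqleft, hqright⟩ :=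
    newton_lift F v (exists_pow_eq_zero hvv)
  have he'p : e' * p = p := by rw [hpty, ← mul_assoc, heu]
  have hpe' : p * e' = p := by rw [hpyt, mul_assoc, hue']
  have hf'q : f' * q = q := by rw [hqty, ← mul_assoc, hfv]
  have hqf' : q * f' = q := by rw [hqyt, mul_assoc, hvf']
  have hcorner : ∀ w : A, u * w * v = e * (e' * w * f') * f := by
    intro w
    have h1 : u * w * v = e' * (e * (e' * w * f') * f) * f' := by
      rw [hudef, hvdef]; noncomm_ring
    rw [h1, ← hkey (e' * w * f')]
  have hcornerA : ∀ x : A, ∃ y : A, p * x * q = e * y * f := by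
    intro x
    refine ⟨e' * (yp * x * yq) * f', ?_⟩
    calc p * x * q = u * (yp * x * yq) * v := by rw [hpty, hqyt]; noncomm_ring
    _ = e * (e' * (yp * x * yq) * f') * f := hcorner _
  have hcornerB : ∀ x : A, ∃ y : A, e * x * f = p * y * q := by
    intro x
    have he'k := (habs (e * x * f) (hkey x)).1
    have hkf' := (habs (e * x * f) (hkey x)).2
    have hek : e * (e * x * f) = e * x * f := by rw [← mul_assoc, ← mul_assoc, hee]
    have hkf : (e * x * f) * f = e * x * f := by rw [mul_assoc, hff]
    have huk : u * (e * x * f) = e * x * f := by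
      have h1 : u * (e * x * f) = e' * (e * (e' * (e * x * f))) := by
        rw [hudef]; noncomm_ring
      rw [h1, he'k, hek, he'k]
    have hkv : (e * x * f) * v = e * x * f := by
      have h1 : (e * x * f) * v = (((e * x * f) * f') * f) * f' := by
        rw [hvdef]; noncomm_ring
      rw [h1, hkf', hkf, hkf']
    refine ⟨e * x * f, ?_⟩
    have h2 : p * (e * x * f) = e * x * f := hpleft _ huk
    have h3 : (e * x * f) * q = e * x * f := hqright _ hkv
    calc e * x * f = (e * x * f) * q := h3.symm
    _ = (p * (e * x * f)) * q := by rw [h2]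
  refine ⟨p, q, ⟨hpp, hqq, ?_⟩, he'p, hpe', hf'q, hqf', hcornerA, hcornerB⟩
  intro c hprim
  have hccen : ∀ a : A, c * a - a * c ∈ J := fun a => hprim.1.2.1 a trivial
  have hpm : p - e * e' ∈ J := by
    have h1 : p - e * e' = (p - u) + (u - e * e') := by abel
    rw [h1, hpsub]
    exact add_mem (jac_mul_right huu rp) hue2
  have hqm : q - f' * f ∈ J := by
    have h1 : q - f' * f = (q - v) + (v - f' * f) := by abel
    rw [h1, hqsub]
    exact add_mem (jac_mul_right hvv rq) hvf2
  have hme : e * e' * e - e ∈ J := by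
    have h1 : e * e' * e - e = e * (e' * e - e) + (e * e - e) := by noncomm_ring
    rw [h1, hee, sub_self, add_zero]
    exact Ideal.mul_mem_left _ e hc1
  have hmf : f * f' * f - f ∈ J := by
    have h1 : f * f' * f - f = (f * f' - f) * f + (f * f - f) := by noncomm_ring
    rw [h1, hff, sub_self, add_zero]
    exact jac_mul_right hc2 f
  have hpe : c * p ∈ J ↔ c * e ∈ J := by
    constructor
    · intro h
      have hcm : c * (e * e') ∈ J := by
        have h2 : c * (e * e') = c * p - c * (p - e * e') := by noncomm_ring
        rw [h2]
        exact sub_mem h (Ideal.mul_mem_left _ _ hpm)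
      have h3 : c * e = -(c * (e * e' * e - e)) + (c * (e * e')) * e := by noncomm_ring
      rw [h3]
      exact add_mem (neg_mem (Ideal.mul_mem_left _ _ hme)) (jac_mul_right hcm e)
    · intro h
      have hcm : c * (e * e') ∈ J := by
        have h2 : c * (e * e') = (c * e) * e' := by noncomm_ring
        rw [h2]
        exact jac_mul_right h e'
      have h2 : c * p = c * (p - e * e') + c * (e * e') := by noncomm_ring
      rw [h2]
      exact add_mem (Ideal.mul_mem_left _ _ hpm) hcm
  have hqf : c * q ∈ J ↔ c * f ∈ J := by
    constructor
    · intro h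
      have hcm : c * (f' * f) ∈ J := by
        have h2 : c * (f' * f) = c * q - c * (q - f' * f) := by noncomm_ring
        rw [h2]
        exact sub_mem h (Ideal.mul_mem_left _ _ hqm)
      have h3 : c * f = -(c * (f * f' * f - f))
          + ((c * f - f * c) * (f' * f) + f * (c * (f' * f))) := by noncomm_ring
      rw [h3]
      exact add_mem (neg_mem (Ideal.mul_mem_left _ _ hmf))
        (add_mem (jac_mul_right (hccen f) _) (Ideal.mul_mem_left _ _ hcm))
    · intro h
      have hcm : c * (f' * f) ∈ J := by
        have h2 : c * (f' * f) = (c * f' - f' * c) * f + f' * (c * f) := by noncomm_ring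
        rw [h2]
        exact add_mem (jac_mul_right (hccen f') f) (Ideal.mul_mem_left _ _ h)
      have h2 : c * q = c * (q - f' * f) + c * (f' * f) := by noncomm_ring
      rw [h2]
      exact add_mem (Ideal.mul_mem_left _ _ hqm) hcm
  have hef := hmod c hprim
  exact ⟨fun h => hqf.2 (hef.1 (hpe.1 h)), fun h => hpe.2 (hef.2 (hqf.1 h))⟩


end Paper
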